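/- (Gevrey Borel lemma for symbol classes S^{m'}_s, Proposition A.2.1, version (A.2.2)) Let s > 1, n ≥ 1, m' ∈ ℝ, C > 0, and for each j ≥ 0 and h ∈ (0,1] let a_j(·,·;h) : ℝ^n × ℝ^n → ℂ be smooth with |∂_x^α ∂_ξ^β a_j(x,ξ;h)| ≤ C^{1+|α|+|β|+j} (α!)^s (β!)^s (j!)^s h^{−m'+j} for all multi-indices α, β, all (x,ξ) and all h. Then there exist C' > 0 and, for each h ∈ (0,1], a smooth function a(·,·;h) : ℝ^n × ℝ^n → ℂ, such that for every N ≥ 1, all multi-indices α, β, all (x,ξ) and all h ∈ (0,1]: |∂_x^α ∂_ξ^β ( a(x,ξ;h) − Σ_{j<N} a_j(x,ξ;h) )| ≤ C'^{1+|α|+|β|+N} (α!)^s (β!)^s (N!)^s h^{−m'+N}. -/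

import Mathlib

open scoped BigOperators Real
open MeasureTheory

noncomputable section

variable {n m : ℕ} {E : Type*} [NormedAddCommGroup E] [NormedSpace ℝ E]

/-- Partial derivative in the `i`-th coordinate of the first factor. -/
def pdx (i : Fin n) (f : (Fin n → ℝ) × (Fin m → ℝ) → E) :
    (Fin n → ℝ) × (Fin m → ℝ) → E :=
  fun p => fderiv ℝ f p (Pi.single i 1, 0)

/-- Partial derivative in the `j`-th coordinate of the second factor. -/
def pdy (j : Fin m) (f : (Fin n → ℝ) × (Fin m → ℝ) → E) :
    (Fin n → ℝ) × (Fin m → ℝ) → E :=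
  fun p => fderiv ℝ f p (0, Pi.single j 1)

/-- Iterated partial derivative ∂_x^α in the first factor. -/
def mdx (α : Fin n → ℕ) (f : (Fin n → ℝ) × (Fin m → ℝ) → E) :
    (Fin n → ℝ) × (Fin m → ℝ) → E :=
  (List.finRange n).foldr (fun i g => (pdx i)^[α i] g) f

/-- Iterated partial derivative ∂_y^β in the second factor. -/
def mdy (β : Fin m → ℕ) (f : (Fin n → ℝ) × (Fin m → ℝ) → E) :
    (Fin n → ℝ) × (Fin m → ℝ) → E :=
  (List.finRange m).foldr (fun j g => (pdy j)^[β j] g) f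

/-- Partial derivative on a single Euclidean factor. -/
def pd {d : ℕ} (i : Fin d) (f : (Fin d → ℝ) → E) : (Fin d → ℝ) → E :=
  fun x => fderiv ℝ f x (Pi.single i 1)

/-- Iterated partial derivative ∂^α on a single Euclidean factor. -/
def md {d : ℕ} (α : Fin d → ℕ) (f : (Fin d → ℝ) → E) : (Fin d → ℝ) → E :=
  (List.finRange d).foldr (fun i g => (pd i)^[α i] g) f

/-- Multi-index factorial `α!`. -/
def mfact {d : ℕ} (α : Fin d → ℕ) : ℕ := ∏ i, (α i).factorial

/-- Multi-index length `|α|`. -/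
def msize {d : ℕ} (α : Fin d → ℕ) : ℕ := ∑ i, α i


section GoodOpAux

/-- Bundle of properties of a differential operator used below: it preserves smoothness,
and commutes with differences and finite sums of smooth functions. -/
def GoodOp {n m : ℕ}
    (D : ((Fin n → ℝ) × (Fin m → ℝ) → ℂ) → ((Fin n → ℝ) × (Fin m → ℝ) → ℂ)) : Prop :=
  (∀ f, ContDiff ℝ (⊤:ℕ∞) f → ContDiff ℝ (⊤:ℕ∞) (D f)) ∧
  (∀ f g, ContDiff ℝ (⊤:ℕ∞) f → ContDiff ℝ (⊤:ℕ∞) g →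
    D (fun p => f p - g p) = fun p => D f p - D g p) ∧
  ∀ (N : ℕ) (f : ℕ → (Fin n → ℝ) × (Fin m → ℝ) → ℂ), (∀ j, ContDiff ℝ (⊤:ℕ∞) (f j)) →
    D (fun p => ∑ j ∈ Finset.range N, f j p) = fun p => ∑ j ∈ Finset.range N, D (f j) p

theorem goodOp_id : GoodOp (n := n) (m := m) (fun f => f) :=
  ⟨fun _ hf => hf, fun _ _ _ _ => rfl, fun _ _ _ => rfl⟩

theorem goodOp_comp {D D' : ((Fin n → ℝ) × (Fin m → ℝ) → ℂ) → ((Fin n → ℝ) × (Fin m → ℝ) → ℂ)}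
    (hD : GoodOp D) (hD' : GoodOp D') : GoodOp (fun f => D (D' f)) := by
  refine ⟨fun f hf => hD.1 _ (hD'.1 _ hf), fun f g hf hg => ?_, fun N f hf => ?_⟩
  · show D (D' (fun p => f p - g p)) = fun p => D (D' f) p - D (D' g) p
    rw [hD'.2.1 f g hf hg, hD.2.1 _ _ (hD'.1 _ hf) (hD'.1 _ hg)]
  · show D (D' (fun p => ∑ j ∈ Finset.range N, f j p))
      = fun p => ∑ j ∈ Finset.range N, D (D' (f j)) p
    rw [hD'.2.2 N f hf, hD.2.2 N _ (fun j => hD'.1 _ (hf j))]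

theorem goodOp_pdx (i : Fin n) : GoodOp (m := m) (pdx i) := by
  refine ⟨fun f hf => (hf.fderiv_right (by exact_mod_cast le_top)).clm_apply contDiff_const,
    fun f g hf hg => ?_, fun N f hf => ?_⟩
  · funext p
    simp only [pdx]
    rw [fderiv_fun_sub ((hf.differentiable (by simp)).differentiableAt)
      ((hg.differentiable (by simp)).differentiableAt)]
    rfl
  · funext p
    simp only [pdx]
    rw [fderiv_fun_sum (fun j _ => ((hf j).differentiable (by simp)).differentiableAt)]
    simp

theorem goodOp_pdy (j : Fin m) : GoodOp (n := n) (pdy j) := by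
  refine ⟨fun f hf => (hf.fderiv_right (by exact_mod_cast le_top)).clm_apply contDiff_const,
    fun f g hf hg => ?_, fun N f hf => ?_⟩
  · funext p
    simp only [pdy]
    rw [fderiv_fun_sub ((hf.differentiable (by simp)).differentiableAt)
      ((hg.differentiable (by simp)).differentiableAt)]
    rfl
  · funext p
    simp only [pdy]
    rw [fderiv_fun_sum (fun j _ => ((hf j).differentiable (by simp)).differentiableAt)]
    simp

theorem goodOp_iterate {D : ((Fin n → ℝ) × (Fin m → ℝ) → ℂ) → ((Fin n → ℝ) × (Fin m → ℝ) → ℂ)}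
    (hD : GoodOp D) (k : ℕ) : GoodOp (D^[k]) := by
  induction k with
  | zero => exact goodOp_id
  | succ k ih =>
    have := goodOp_comp ih hD
    rw [Function.iterate_succ]
    exact this

theorem goodOp_foldr {ι : Type*}
    (F : ι → ((Fin n → ℝ) × (Fin m → ℝ) → ℂ) → ((Fin n → ℝ) × (Fin m → ℝ) → ℂ))
    (hF : ∀ i, GoodOp (F i)) (l : List ι) :
    GoodOp (fun f => l.foldr (fun i g => F i g) f) := by
  induction l with
  | nil => exact goodOp_id
  | cons i l ih => exact goodOp_comp (hF i) ih

theorem goodOp_mdx (α : Fin n → ℕ) : GoodOp (mdx (m := m) α) :=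
  goodOp_foldr (fun i => (pdx i)^[α i]) (fun i => goodOp_iterate (goodOp_pdx i) (α i))
    (List.finRange n)

theorem goodOp_mdy (β : Fin m → ℕ) : GoodOp (mdy (n := n) β) :=
  goodOp_foldr (fun j => (pdy j)^[β j]) (fun j => goodOp_iterate (goodOp_pdy j) (β j))
    (List.finRange m)

end GoodOpAux

/-- **Gevrey Borel lemma for symbol classes `S^{m'}_s`** (Proposition A.2.1, version (A.2.2)):
a formal Gevrey symbol `(a_j)` can be realized by a single symbol `a` with remainders at the
Gevrey scale `(N!)^s h^{−m'+N}`. -/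
theorem gevrey_borel_symbols
    (s : ℝ) (hs : 1 < s) (n : ℕ) (hn : 1 ≤ n) (m' C : ℝ) (hC : 0 < C)
    (aj : ℕ → ℝ → (Fin n → ℝ) × (Fin n → ℝ) → ℂ)
    (haj : ∀ j : ℕ, ∀ h ∈ Set.Ioc (0:ℝ) 1, ContDiff ℝ (⊤ : ℕ∞) (aj j h))
    (hajG : ∀ j : ℕ, ∀ h ∈ Set.Ioc (0:ℝ) 1, ∀ (α β : Fin n → ℕ) p,
      ‖mdx α (mdy β (aj j h)) p‖ ≤
        C ^ (1 + msize α + msize β + j) * ((mfact α : ℕ) : ℝ) ^ s * ((mfact β : ℕ) : ℝ) ^ s *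
          ((j.factorial : ℝ)) ^ s * h ^ (-m' + (j : ℝ))) :
    ∃ C' > 0, ∃ a : ℝ → (Fin n → ℝ) × (Fin n → ℝ) → ℂ,
      (∀ h ∈ Set.Ioc (0:ℝ) 1, ContDiff ℝ (⊤ : ℕ∞) (a h)) ∧
      ∀ N : ℕ, 1 ≤ N → ∀ (α β : Fin n → ℕ) (p : (Fin n → ℝ) × (Fin n → ℝ)),
        ∀ h ∈ Set.Ioc (0:ℝ) 1,
        ‖mdx α (mdy β (fun q => a h q - ∑ j ∈ Finset.range N, aj j h q)) p‖ ≤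
          C' ^ (1 + msize α + msize β + N) * ((mfact α : ℕ) : ℝ) ^ s *
            ((mfact β : ℕ) : ℝ) ^ s * ((N.factorial : ℝ)) ^ s * h ^ (-m' + (N : ℝ)) := by
  classical
  have hs0 : (0:ℝ) < s := by linarith
  refine ⟨8 * max C 1, by positivity,
    fun h q => ∑ j ∈ Finset.range (⌊(2*C*h)^(-(1:ℝ)/s)⌋₊ + 1), aj j h q,
    fun h hh => ContDiff.sum (fun j _ => haj j h hh), fun N hN α β p h hh => ?_⟩
  obtain ⟨hh0, hh1⟩ := hh
  beta_reduce
  set K : ℕ := ⌊(2*C*h)^(-(1:ℝ)/s)⌋₊ with hKdef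
  set A : ℕ := msize α with hA
  set B : ℕ := msize β with hB
  set Fa : ℝ := ((mfact α : ℕ) : ℝ) ^ s with hFa
  set Fb : ℝ := ((mfact β : ℕ) : ℝ) ^ s with hFb
  have hFa0 : 0 ≤ Fa := by rw [hFa]; positivity
  have hFb0 : 0 ≤ Fb := by rw [hFb]; positivity
  set T : ℕ → ℝ :=
    fun j => C ^ (1 + A + B + j) * Fa * Fb * ((j.factorial : ℝ)) ^ s * h ^ (-m' + (j:ℝ))
    with hT
  have hTj : ∀ j : ℕ,
      T j = C ^ (1 + A + B + j) * Fa * Fb * ((j.factorial : ℝ)) ^ s * h ^ (-m' + (j:ℝ)) :=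
    fun j => by rw [hT]
  set u : ℕ → ℂ := fun j => mdx α (mdy β (aj j h)) p with hu_def
  have hsm : ∀ j : ℕ, ContDiff ℝ (⊤:ℕ∞) (aj j h) := fun j => haj j h ⟨hh0, hh1⟩
  have hu : ∀ j, ‖u j‖ ≤ T j := by
    intro j
    rw [hu_def, hTj j, hFa, hFb, hA, hB]
    exact hajG j h ⟨hh0, hh1⟩ α β p
  have hT0 : ∀ j, 0 ≤ T j := fun j => by
    rw [hTj j]
    exact mul_nonneg (mul_nonneg (mul_nonneg (mul_nonneg (pow_nonneg hC.le _) hFa0) hFb0)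
      (Real.rpow_nonneg (Nat.cast_nonneg _) _)) (Real.rpow_nonneg hh0.le _)
  have hGxy : GoodOp (fun f => mdx α (mdy β f)) := goodOp_comp (goodOp_mdx α) (goodOp_mdy β)
  have key : mdx α (mdy β (fun q =>
        (∑ j ∈ Finset.range (K+1), aj j h q) - ∑ j ∈ Finset.range N, aj j h q)) p
      = (∑ j ∈ Finset.range (K+1), u j) - ∑ j ∈ Finset.range N, u j := by
    have h1 := hGxy.2.1 (fun q => ∑ j ∈ Finset.range (K+1), aj j h q)
      (fun q => ∑ j ∈ Finset.range N, aj j h q)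
      (ContDiff.sum fun j _ => hsm j) (ContDiff.sum fun j _ => hsm j)
    have h2 := hGxy.2.2 (K+1) (fun j => aj j h) hsm
    have h3 := hGxy.2.2 N (fun j => aj j h) hsm
    calc mdx α (mdy β (fun q =>
          (∑ j ∈ Finset.range (K+1), aj j h q) - ∑ j ∈ Finset.range N, aj j h q)) p
        = mdx α (mdy β (fun q => ∑ j ∈ Finset.range (K+1), aj j h q)) p
            - mdx α (mdy β (fun q => ∑ j ∈ Finset.range N, aj j h q)) p := congrFun h1 p
      _ = (∑ j ∈ Finset.range (K+1), u j) - ∑ j ∈ Finset.range N, u j := by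
          rw [show mdx α (mdy β fun q => ∑ j ∈ Finset.range (K+1), aj j h q) p
              = ∑ j ∈ Finset.range (K+1), u j from congrFun h2 p,
            show mdx α (mdy β fun q => ∑ j ∈ Finset.range N, aj j h q) p
              = ∑ j ∈ Finset.range N, u j from congrFun h3 p]
  rw [key]
  -- the succ-step recurrence for T
  have hTsucc : ∀ j : ℕ, T (j+1) = T j * (C * (((j:ℝ))+1)^s * h) := by
    intro j
    rw [hTj, hTj, Nat.factorial_succ]
    push_cast
    rw [Real.mul_rpow (by positivity) (by positivity),
      show (1 + A + B + (j+1)) = (1 + A + B + j) + 1 from rfl, pow_succ,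
      show -m' + ((j:ℝ)+1) = (-m' + (j:ℝ)) + 1 by ring, Real.rpow_add hh0, Real.rpow_one]
    ring
  have hs_ne : s ≠ 0 := by linarith
  have hhalf_up : ∀ k : ℕ, k ≤ K → C * (k:ℝ)^s * h ≤ 1/2 := by
    intro k hk
    have hx0 : (0:ℝ) ≤ (2*C*h)^(-(1:ℝ)/s) := Real.rpow_nonneg (by positivity) _
    have hkc : (k:ℝ) ≤ ((K:ℕ):ℝ) := by exact_mod_cast hk
    have h1 : (k:ℝ) ≤ (2*C*h)^(-(1:ℝ)/s) := le_trans hkc (Nat.floor_le hx0)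
    have h2 : (k:ℝ)^s ≤ ((2*C*h)^(-(1:ℝ)/s))^s :=
      Real.rpow_le_rpow (Nat.cast_nonneg k) h1 hs0.le
    have h3 : ((2*C*h)^(-(1:ℝ)/s))^s = (2*C*h)⁻¹ := by
      rw [← Real.rpow_mul (by positivity : (0:ℝ) ≤ 2*C*h),
        show (-(1:ℝ)/s) * s = -1 by field_simp, Real.rpow_neg_one]
    have h4 : (k:ℝ)^s ≤ (2*C*h)⁻¹ := h3 ▸ h2
    calc C * (k:ℝ)^s * h ≤ C * (2*C*h)⁻¹ * h := by
          have := mul_le_mul_of_nonneg_left h4 hC.le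
          nlinarith
      _ = 1/2 := by field_simp
  have hhalf_down : ∀ k : ℕ, K + 1 ≤ k → 1/2 ≤ C * (k:ℝ)^s * h := by
    intro k hk
    have hkc : ((K:ℕ):ℝ) + 1 ≤ (k:ℝ) := by exact_mod_cast hk
    have h1 : (2*C*h)^(-(1:ℝ)/s) < (k:ℝ) :=
      lt_of_lt_of_le (Nat.lt_floor_add_one _) hkc
    have hx0 : (0:ℝ) ≤ (2*C*h)^(-(1:ℝ)/s) := Real.rpow_nonneg (by positivity) _
    have h2 : ((2*C*h)^(-(1:ℝ)/s))^s ≤ (k:ℝ)^s := Real.rpow_le_rpow hx0 h1.le hs0.le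
    have h3 : ((2*C*h)^(-(1:ℝ)/s))^s = (2*C*h)⁻¹ := by
      rw [← Real.rpow_mul (by positivity : (0:ℝ) ≤ 2*C*h),
        show (-(1:ℝ)/s) * s = -1 by field_simp, Real.rpow_neg_one]
    have h4 : (2*C*h)⁻¹ ≤ (k:ℝ)^s := h3 ▸ h2
    have h5 : (0:ℝ) < 2*C*h := by positivity
    rw [inv_le_iff_one_le_mul₀ h5] at h4
    nlinarith
  -- iterated bounds
  have hup : ∀ d : ℕ, N + d ≤ K → T (N + d) ≤ (1/2:ℝ)^d * T N := by
    intro d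
    induction d with
    | zero => intro _; simp
    | succ d ih =>
      intro hd
      have h1 : T (N + d + 1) = T (N+d) * (C * (((N+d:ℕ):ℝ)+1)^s * h) := hTsucc (N+d)
      have hcast : (((N+d:ℕ)):ℝ) + 1 = ((N+d+1:ℕ):ℝ) := by push_cast; ring
      have h2 : C * (((N+d+1:ℕ)):ℝ)^s * h ≤ 1/2 := hhalf_up (N+d+1) (by omega)
      have h3 := ih (by omega)
      have h4 : (0:ℝ) ≤ C * ((N+d+1:ℕ):ℝ)^s * h := by positivity
      have h5 : (0:ℝ) ≤ (1/2:ℝ)^d * T N := mul_nonneg (by positivity) (hT0 N)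
      calc T (N + (d+1)) = T (N+d) * (C * (((N+d+1:ℕ)):ℝ)^s * h) := by
            rw [show N + (d+1) = (N+d)+1 from rfl, h1, hcast]
        _ ≤ ((1/2:ℝ)^d * T N) * (1/2) := mul_le_mul h3 h2 h4 h5
        _ = (1/2:ℝ)^(d+1) * T N := by ring
  have hdown : ∀ d j : ℕ, K + 1 ≤ j → T j ≤ 2^d * T (j + d) := by
    intro d
    induction d with
    | zero => intro j _; simp
    | succ d ih =>
      intro j hj
      have h1 : T (j+1) = T j * (C * ((j:ℝ)+1)^s * h) := hTsucc j
      have hcast : ((j:ℝ)+1) = ((j+1:ℕ):ℝ) := by push_cast; ring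
      have h2 : 1/2 ≤ C * ((j+1:ℕ):ℝ)^s * h := hhalf_down (j+1) (by omega)
      have h3 : T j ≤ 2 * T (j+1) := by
        have h4 : T j * (1/2) ≤ T j * (C * ((j+1:ℕ):ℝ)^s * h) :=
          mul_le_mul_of_nonneg_left h2 (hT0 j)
        rw [h1, hcast]
        linarith
      have h5 := ih (j+1) (by omega)
      calc T j ≤ 2 * T (j+1) := h3
        _ ≤ 2 * (2^d * T (j+1+d)) := by linarith
        _ = 2^(d+1) * T (j + (d+1)) := by rw [show j+1+d = j+(d+1) by omega]; ring
  -- main estimate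
  have hmain : ‖(∑ j ∈ Finset.range (K+1), u j) - ∑ j ∈ Finset.range N, u j‖
      ≤ 2 * 4^N * T N := by
    rcases le_or_gt N (K+1) with hc | hc
    · have e1 : (∑ j ∈ Finset.range (K+1), u j) - ∑ j ∈ Finset.range N, u j
          = ∑ j ∈ Finset.Ico N (K+1), u j := (Finset.sum_Ico_eq_sub u hc).symm
      rw [e1]
      have b1 : ∀ j ∈ Finset.Ico N (K+1), ‖u j‖ ≤ (1/2:ℝ)^(j-N) * T N := by
        intro j hj
        rw [Finset.mem_Ico] at hj
        have h1 := hup (j - N) (by omega)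
        rw [show N + (j-N) = j by omega] at h1
        exact le_trans (hu j) h1
      have b2 : ‖∑ j ∈ Finset.Ico N (K+1), u j‖
          ≤ ∑ j ∈ Finset.Ico N (K+1), (1/2:ℝ)^(j-N) * T N :=
        le_trans (norm_sum_le _ _) (Finset.sum_le_sum b1)
      have b3 : ∑ j ∈ Finset.Ico N (K+1), (1/2:ℝ)^(j-N) * T N ≤ 2 * T N := by
        rw [← Finset.sum_mul]
        have hgeom : ∑ j ∈ Finset.Ico N (K+1), (1/2:ℝ)^(j-N) ≤ 2 := by
          rw [Finset.sum_Ico_eq_sum_range]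
          have : ∀ i ∈ Finset.range (K+1-N), ((1:ℝ)/2)^(N + i - N) = (1/2:ℝ)^i := by
            intro i _
            congr 1
            omega
          rw [Finset.sum_congr rfl this]
          exact sum_geometric_two_le _
        exact mul_le_mul_of_nonneg_right hgeom (hT0 N)
      have h4 : (1:ℝ) ≤ 4^N := one_le_pow₀ (by norm_num : (1:ℝ) ≤ 4)
      nlinarith [hT0 N]
    · have e2 : (∑ j ∈ Finset.range (K+1), u j) - ∑ j ∈ Finset.range N, u j
          = -((∑ j ∈ Finset.range N, u j) - ∑ j ∈ Finset.range (K+1), u j) := by ring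
      rw [e2, norm_neg]
      have e3 : (∑ j ∈ Finset.range N, u j) - ∑ j ∈ Finset.range (K+1), u j
          = ∑ j ∈ Finset.Ico (K+1) N, u j := (Finset.sum_Ico_eq_sub u hc.le).symm
      rw [e3]
      have b1 : ∀ j ∈ Finset.Ico (K+1) N, ‖u j‖ ≤ 2^N * T N := by
        intro j hj
        rw [Finset.mem_Ico] at hj
        have h1 := hdown (N - j) j hj.1
        rw [show j + (N-j) = N by omega] at h1
        have h2 : (2:ℝ)^(N-j) ≤ 2^N := pow_le_pow_right₀ one_le_two (by omega)
        have h3 : T j ≤ 2^N * T N :=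
          le_trans h1 (mul_le_mul_of_nonneg_right h2 (hT0 N))
        exact (hu j).trans h3
      have b2 : ‖∑ j ∈ Finset.Ico (K+1) N, u j‖
          ≤ ∑ j ∈ Finset.Ico (K+1) N, (2:ℝ)^N * T N :=
        le_trans (norm_sum_le _ _) (Finset.sum_le_sum b1)
      have b3 : ∑ j ∈ Finset.Ico (K+1) N, (2:ℝ)^N * T N
          = ((N - (K+1) : ℕ) : ℝ) * ((2:ℝ)^N * T N) := by
        rw [Finset.sum_const, Nat.card_Ico, nsmul_eq_mul]
      have hcard : ((N - (K+1) : ℕ) : ℝ) ≤ (2:ℝ)^N := by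
        calc ((N - (K+1) : ℕ) : ℝ) ≤ (N:ℝ) := by exact_mod_cast Nat.sub_le _ _
          _ ≤ 2^N := by exact_mod_cast (Nat.lt_two_pow_self (n := N)).le
      have hx : (0:ℝ) ≤ (2:ℝ)^N * T N := mul_nonneg (by positivity) (hT0 N)
      calc ‖∑ j ∈ Finset.Ico (K+1) N, u j‖
          ≤ ((N - (K+1) : ℕ) : ℝ) * ((2:ℝ)^N * T N) := by rw [← b3]; exact b2
        _ ≤ (2:ℝ)^N * ((2:ℝ)^N * T N) := mul_le_mul_of_nonneg_right hcard hx
        _ ≤ 2 * 4^N * T N := by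
            have : (2:ℝ)^N * (2:ℝ)^N = 4^N := by
              rw [← mul_pow]; norm_num
            nlinarith [hT0 N, pow_nonneg (by norm_num : (0:ℝ) ≤ 2) N]
  -- conclude
  refine le_trans hmain ?_
  have hcore : 2 * (4:ℝ)^N * C^(1+A+B+N) ≤ (8 * max C 1)^(1+A+B+N) := by
    have h1 : C^(1+A+B+N) ≤ (max C 1)^(1+A+B+N) := pow_le_pow_left₀ hC.le (le_max_left C 1) _
    have h2 : 2 * (4:ℝ)^N ≤ 8^(1+A+B+N) := by
      calc 2 * (4:ℝ)^N ≤ 8 * 8^N := by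
            have h3 : (4:ℝ)^N ≤ 8^N := pow_le_pow_left₀ (by norm_num) (by norm_num) N
            nlinarith [pow_nonneg (by norm_num : (0:ℝ) ≤ 4) N]
        _ = 8^(1+N) := by rw [pow_add, pow_one]
        _ ≤ 8^(1+A+B+N) := pow_le_pow_right₀ (by norm_num) (by omega)
    calc 2 * (4:ℝ)^N * C^(1+A+B+N) ≤ 8^(1+A+B+N) * (max C 1)^(1+A+B+N) :=
          mul_le_mul h2 h1 (pow_nonneg hC.le _) (by positivity)
      _ = (8 * max C 1)^(1+A+B+N) := (mul_pow _ _ _).symm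
  have hrest : (0:ℝ) ≤ Fa * Fb * ((N.factorial : ℝ)) ^ s * h ^ (-m' + (N:ℝ)) :=
    mul_nonneg (mul_nonneg (mul_nonneg hFa0 hFb0) (Real.rpow_nonneg (Nat.cast_nonneg _) _))
      (Real.rpow_nonneg hh0.le _)
  calc 2 * 4^N * T N
      = (2 * (4:ℝ)^N * C^(1+A+B+N)) * (Fa * Fb * ((N.factorial : ℝ)) ^ s * h ^ (-m' + (N:ℝ))) := by
        rw [hTj N]; ring
    _ ≤ ((8 * max C 1)^(1+A+B+N)) * (Fa * Fb * ((N.factorial : ℝ)) ^ s * h ^ (-m' + (N:ℝ))) :=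
        mul_le_mul_of_nonneg_right hcore hrest
    _ = (8 * max C 1)^(1+A+B+N) * Fa * Fb * ((N.factorial : ℝ)) ^ s * h ^ (-m' + (N:ℝ)) := by
        ring
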